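/- (Lossless energy rate relation.) Let P = (I, L, H) be an n-channel open quantum system and let W = (R, w, D) be an n-channel open quantum system whose Hamiltonian has the form D = −i Σ_{k=1}^m (K_k* v_k − v_k* K_k) for bounded operators K_k, v_k. Let V₀ be a bounded self-adjoint nonnegative operator satisfying [V₀, H] = 0, [V₀, v_k] = 0 and [V₀, v_k*] = 0 for all k. Then the generator of the series connection P ◁ W satisfies 𝒢_{P◁W}(V₀) = 𝓛_w(V₀) + 𝓛_L(V₀) + Σ_{j=1}^n ( w_j*[V₀, L_j] + [L_j*, V₀]w_j ) + Σ_{k=1}^m ( v_k*[V₀, K_k] + [K_k*, V₀]v_k ). In particular the right-hand side does not depend on the scattering matrix R. -/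

import Mathlib

noncomputable section

open Finset

variable {E : Type*} [NormedAddCommGroup E] [InnerProductSpace ℂ E] [CompleteSpace E]

/-- `Im{A} = (A - A*)/(2i)`. -/
def imOp (A : E →L[ℂ] E) : E →L[ℂ] E := (2 * Complex.I)⁻¹ • (A - star A)

/-- An open quantum system `(S, L, H)` with field channels indexed by `ι`: an `ι×ι` matrix
`S` of bounded operators, an `ι`-vector `L` of bounded operators, and an operator `H`. -/
structure QOpen (ι : Type*) (E : Type*) [NormedAddCommGroup E] [InnerProductSpace ℂ E]
    [CompleteSpace E] where
  S : Matrix ι ι (E →L[ℂ] E)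
  L : ι → E →L[ℂ] E
  H : E →L[ℂ] E

/-- The scattering matrix of `G` is unitary: `S†S = SS† = I`. -/
def QOpen.unitaryS {ι : Type*} [Fintype ι] [DecidableEq ι] (G : QOpen ι E) : Prop :=
  G.S.conjTranspose * G.S = 1 ∧ G.S * G.S.conjTranspose = 1

/-- The series product `G₂ ◁ G₁ = (S₂S₁, L₂ + S₂L₁, H₁ + H₂ + Im{L₂†S₂L₁})`. -/
def series {ι : Type*} [Fintype ι] (G₂ G₁ : QOpen ι E) : QOpen ι E where
  S := G₂.S * G₁.S
  L := fun j => G₂.L j + ∑ k, G₂.S j k * G₁.L k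
  H := G₁.H + G₂.H + imOp (∑ j, ∑ k, star (G₂.L j) * G₂.S j k * G₁.L k)

open scoped ComplexOrder

/-- The Lindblad superoperator `𝓛_L(X) = (1/2) Σ_j (L_j* [X, L_j] + [L_j*, X] L_j)`. -/
def lindblad {ι : Type*} [Fintype ι] (L : ι → E →L[ℂ] E) (X : E →L[ℂ] E) : E →L[ℂ] E :=
  (2 : ℂ)⁻¹ • ∑ j, (star (L j) * ⁅X, L j⁆ + ⁅star (L j), X⁆ * L j)

/-- The generator `𝒢_G(X) = −i[X, H] + 𝓛_L(X)` of an open quantum system `G`. -/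
def QOpen.gen {ι : Type*} [Fintype ι] (G : QOpen ι E) (X : E →L[ℂ] E) : E →L[ℂ] E :=
  (-Complex.I) • ⁅X, G.H⁆ + lindblad G.L X

section helpers

private lemma lieH_mul {A : Type*} [Ring A] (x y z : A) :
    ⁅x, y * z⁆ = ⁅x, y⁆ * z + y * ⁅x, z⁆ := by
  simp only [Ring.lie_def]; noncomm_ring

private lemma lieH_sum {A : Type*} [Ring A] {ι : Type*} (s : Finset ι) (x : A) (f : ι → A) :
    ⁅x, ∑ i ∈ s, f i⁆ = ∑ i ∈ s, ⁅x, f i⁆ := by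
  simp only [Ring.lie_def, Finset.mul_sum, Finset.sum_mul, ← Finset.sum_sub_distrib]

private lemma lieH_sub {A : Type*} [Ring A] (x y z : A) :
    ⁅x, y - z⁆ = ⁅x, y⁆ - ⁅x, z⁆ := by
  simp only [Ring.lie_def]; noncomm_ring

private lemma lieH_neg {A : Type*} [Ring A] (x y : A) :
    ⁅x, -y⁆ = -⁅x, y⁆ := by
  simp only [Ring.lie_def]; noncomm_ring

private lemma lieH_smul {A : Type*} [Ring A] [Algebra ℂ A] (x y : A) (c : ℂ) :
    ⁅x, c • y⁆ = c • ⁅x, y⁆ := by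
  simp only [Ring.lie_def, mul_smul_comm, smul_mul_assoc, smul_sub]

end helpers


/-- lossless energy rate relation: for the plant `P = (I, L, H)` in series
with an exosystem `W = (R, w, D)` whose Hamiltonian is
`D = −i Σ_k (K_k* v_k − v_k* K_k)`, and a nonnegative self-adjoint `V₀` commuting with
`H` and with every `v_k`, `v_k*`, the generator of `P ◁ W` satisfies
`𝒢_{P◁W}(V₀) = 𝓛_w(V₀) + 𝓛_L(V₀) + Σ_j (w_j*[V₀,L_j] + [L_j*,V₀]w_j)
  + Σ_k (v_k*[V₀,K_k] + [K_k*,V₀]v_k)`.  In particular the right-hand side does not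
depend on the scattering matrix `R`. -/
theorem stmt_7 {ι κ : Type*} [Fintype ι] [DecidableEq ι] [Fintype κ]
    (L : ι → E →L[ℂ] E) (Hm : E →L[ℂ] E)
    (R : Matrix ι ι (E →L[ℂ] E)) (w : ι → E →L[ℂ] E)
    (K v : κ → E →L[ℂ] E)
    (hHm : IsSelfAdjoint Hm)
    (hR : (QOpen.mk R w ((-Complex.I) • ∑ k, (star (K k) * v k - star (v k) * K k))).unitaryS)
    (V₀ : E →L[ℂ] E)
    (hV₀sa : IsSelfAdjoint V₀) (hV₀pos : ∀ ψ : E, 0 ≤ (inner ℂ ψ (V₀ ψ) : ℂ))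
    (hVH : ⁅V₀, Hm⁆ = 0)
    (hVv : ∀ k, ⁅V₀, v k⁆ = 0) (hVvs : ∀ k, ⁅V₀, star (v k)⁆ = 0) :
    (series (QOpen.mk (1 : Matrix ι ι (E →L[ℂ] E)) L Hm)
        (QOpen.mk R w
          ((-Complex.I) • ∑ k, (star (K k) * v k - star (v k) * K k)))).gen V₀
      = lindblad w V₀ + lindblad L V₀
        + (∑ j, (star (w j) * ⁅V₀, L j⁆ + ⁅star (L j), V₀⁆ * w j))
        + ∑ k, (star (v k) * ⁅V₀, K k⁆ + ⁅star (K k), V₀⁆ * v k) := by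
  set D : E →L[ℂ] E := (-Complex.I) • ∑ k, (star (K k) * v k - star (v k) * K k) with hD
  have hsum1 : ∀ j, (∑ k, (1 : Matrix ι ι (E →L[ℂ] E)) j k * w k) = w j := by
    intro j; simp [Matrix.one_apply]
  have hsum2 : (∑ j, ∑ k, star (L j) * (1 : Matrix ι ι (E →L[ℂ] E)) j k * w k)
      = ∑ j, star (L j) * w j := by
    simp [Matrix.one_apply]
  simp only [QOpen.gen, series, hsum1, hsum2]
  rw [show ⁅V₀, D + Hm + imOp (∑ j, star (L j) * w j)⁆ = ⁅V₀, D⁆ + ⁅V₀, Hm⁆ + ⁅V₀, imOp (∑ j, star (L j) * w j)⁆ by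
      simp only [Ring.lie_def]; noncomm_ring, hVH, add_zero, smul_add]
  have hA : (-Complex.I) • ⁅V₀, D⁆
      = ∑ k, (star (v k) * ⁅V₀, K k⁆ + ⁅star (K k), V₀⁆ * v k) := by
    rw [hD, lieH_smul, smul_smul]
    have h1 : (-Complex.I) * (-Complex.I) = -1 := by
      simp [Complex.I_mul_I]
    rw [h1, lieH_sum, neg_one_smul, ← Finset.sum_neg_distrib]
    refine Finset.sum_congr rfl fun k _ => ?_
    rw [lieH_sub, lieH_mul, lieH_mul, hVv k, hVvs k, mul_zero, add_zero, zero_mul, zero_add]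
    simp only [Ring.lie_def]
    noncomm_ring
  have hB : (-Complex.I) • ⁅V₀, imOp (∑ j, star (L j) * w j)⁆
      = (2 : ℂ)⁻¹ • ∑ j, (star (w j) * ⁅V₀, L j⁆ + ⁅star (L j), V₀⁆ * w j
          - star (L j) * ⁅V₀, w j⁆ - ⁅star (w j), V₀⁆ * L j) := by
    rw [imOp, lieH_smul, smul_smul]
    have h1 : (-Complex.I) * (2 * Complex.I)⁻¹ = -(2 : ℂ)⁻¹ := by
      field_simp
    rw [h1, neg_smul, ← smul_neg]
    congr 1
    rw [star_sum]
    simp only [star_mul, star_star]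
    rw [← lieH_neg, neg_sub, lieH_sub, lieH_sum, lieH_sum, ← Finset.sum_sub_distrib]
    refine Finset.sum_congr rfl fun j _ => ?_
    rw [lieH_mul, lieH_mul]
    simp only [Ring.lie_def]
    noncomm_ring
  have hC : lindblad (fun j => L j + w j) V₀
      = lindblad L V₀ + lindblad w V₀ + (2 : ℂ)⁻¹ • ∑ j,
          (star (L j) * ⁅V₀, w j⁆ + star (w j) * ⁅V₀, L j⁆
            + ⁅star (L j), V₀⁆ * w j + ⁅star (w j), V₀⁆ * L j) := by
    simp only [lindblad]
    rw [← smul_add, ← smul_add, ← Finset.sum_add_distrib, ← Finset.sum_add_distrib]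
    congr 1
    refine Finset.sum_congr rfl fun j _ => ?_
    simp only [star_add, Ring.lie_def]
    noncomm_ring
  rw [hA, hB, hC]
  have hBC : (2 : ℂ)⁻¹ • (∑ j, (star (w j) * ⁅V₀, L j⁆ + ⁅star (L j), V₀⁆ * w j
          - star (L j) * ⁅V₀, w j⁆ - ⁅star (w j), V₀⁆ * L j))
      + (2 : ℂ)⁻¹ • (∑ j, (star (L j) * ⁅V₀, w j⁆ + star (w j) * ⁅V₀, L j⁆
            + ⁅star (L j), V₀⁆ * w j + ⁅star (w j), V₀⁆ * L j))
      = ∑ j, (star (w j) * ⁅V₀, L j⁆ + ⁅star (L j), V₀⁆ * w j) := by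
    rw [← smul_add, ← Finset.sum_add_distrib, Finset.smul_sum]
    refine Finset.sum_congr rfl fun j _ => ?_
    module
  rw [← hBC]
  abel
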